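/- arXiv:2604.06058 — 6 statements merged into one kernel-verified Lean document; each statement's English description precedes it below -/
import Mathlib

section
/- Let g : ℝ → ℝ be L_d-Lipschitz on an interval [a, b] with b - a = T_p, and suppose g attains value d* ≥ 0 at some t* ∈ [a,b]. If T_p ≥ d*/L_d, then there exists a subinterval [τ₁, τ₂] ⊆ [a, b] such that ∫_{τ₁}^{τ₂} g(s) ds ≥ (d*)² / (2 L_d). -/
open intervalIntegral in
lemma affine_integral (u v C L : ℝ) :
    ∫ s in u..v, (C + L * s) = C * (v - u) + L * (v ^ 2 - u ^ 2) / 2 := by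
  rw [intervalIntegral.integral_add (f := fun _ => C) (g := fun s => L * s) intervalIntegrable_const
      ((continuous_const.mul continuous_id').intervalIntegrable _ _),
    intervalIntegral.integral_const_mul, integral_id]
  simp
  ring

theorem stmt_1 (g : ℝ → ℝ) (Ld Tp a b tstar dstar : ℝ)
    (hLd : 0 < Ld) (hTp : 0 < Tp)
    (hg : LipschitzWith Ld.toNNReal g)
    (hts : tstar ∈ Set.Icc a b) (hval : g tstar = dstar) (hd0 : 0 ≤ dstar)
    (hab : b - a = Tp) (hcase : Tp ≥ dstar / Ld) :
    ∃ τ₁ τ₂ : ℝ, a ≤ τ₁ ∧ τ₁ ≤ τ₂ ∧ τ₂ ≤ b ∧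
      (∫ s in τ₁..τ₂, g s) ≥ dstar ^ 2 / (2 * Ld) := by
  obtain ⟨hat, htb⟩ := hts
  set r : ℝ := dstar / Ld with hrdef
  have hr0 : 0 ≤ r := div_nonneg hd0 hLd.le
  have hLr : Ld * r = dstar := by rw [hrdef]; field_simp
  have hbar : a ≤ b - r := by linarith
  set τ₂ : ℝ := min b (tstar + r) with hτ₂
  set τ₁ : ℝ := τ₂ - r with hτ₁
  have hτ₂b : τ₂ ≤ b := min_le_left _ _
  have htτ₂ : tstar ≤ τ₂ := le_min htb (by linarith)
  have haτ₁ : a ≤ τ₁ := by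
    rcases le_total b (tstar + r) with h | h
    · simp [hτ₁, hτ₂, min_eq_left h]; linarith
    · simp [hτ₁, hτ₂, min_eq_right h]; linarith
  have hτ₁t : τ₁ ≤ tstar := by
    have : τ₂ ≤ tstar + r := min_le_right _ _
    simp only [hτ₁]; linarith
  have h12 : τ₁ ≤ τ₂ := le_trans hτ₁t htτ₂
  refine ⟨τ₁, τ₂, haτ₁, h12, hτ₂b, ?_⟩
  -- pointwise lower bound
  have hlow : ∀ s : ℝ, dstar - Ld * |s - tstar| ≤ g s := by
    intro s
    have h := hg.dist_le_mul s tstar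
    rw [Real.coe_toNNReal _ hLd.le] at h
    rw [Real.dist_eq, Real.dist_eq] at h
    have := abs_le.mp h
    have h2 := this.1
    rw [hval] at h2
    linarith
  have hgint : IntervalIntegrable g MeasureTheory.volume τ₁ τ₂ :=
    (hg.continuous).intervalIntegrable _ _
  have hcontlow : Continuous fun s => dstar - Ld * |s - tstar| := by
    continuity
  have hmono : (∫ s in τ₁..τ₂, (dstar - Ld * |s - tstar|)) ≤ ∫ s in τ₁..τ₂, g s := by
    apply intervalIntegral.integral_mono_on h12 (hcontlow.intervalIntegrable _ _) hgint
    intro s _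
    exact hlow s
  refine le_trans ?_ hmono
  -- split the integral at tstar
  have hsplit : (∫ s in τ₁..τ₂, (dstar - Ld * |s - tstar|)) =
      (∫ s in τ₁..tstar, (dstar - Ld * |s - tstar|)) +
      ∫ s in tstar..τ₂, (dstar - Ld * |s - tstar|) :=
    (intervalIntegral.integral_add_adjacent_intervals
      (hcontlow.intervalIntegrable _ _) (hcontlow.intervalIntegrable _ _)).symm
  have hleft : (∫ s in τ₁..tstar, (dstar - Ld * |s - tstar|)) =
      ∫ s in τ₁..tstar, ((dstar - Ld * tstar) + Ld * s) := by
    apply intervalIntegral.integral_congr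
    intro s hs
    dsimp only
    rw [Set.uIcc_of_le hτ₁t] at hs
    have : |s - tstar| = tstar - s := by
      rw [abs_of_nonpos (by linarith [hs.2])]; ring
    rw [this]; ring
  have hright : (∫ s in tstar..τ₂, (dstar - Ld * |s - tstar|)) =
      ∫ s in tstar..τ₂, ((dstar + Ld * tstar) + (-Ld) * s) := by
    apply intervalIntegral.integral_congr
    intro s hs
    dsimp only
    rw [Set.uIcc_of_le htτ₂] at hs
    have : |s - tstar| = s - tstar := abs_of_nonneg (by linarith [hs.1])
    rw [this]; ring
  rw [hsplit, hleft, hright, affine_integral, affine_integral]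
  have hp : 0 ≤ tstar - τ₁ := by linarith
  have hq : 0 ≤ τ₂ - tstar := by linarith
  have hpq : (tstar - τ₁) + (τ₂ - tstar) = r := by
    show tstar - (τ₂ - r) + (τ₂ - tstar) = r; ring
  have hval2 : dstar ^ 2 / (2 * Ld) = dstar * r - Ld * r ^ 2 / 2 := by
    field_simp [hrdef]; rw [← hLr]; ring
  rw [hval2]
  have hkey : (dstar - Ld * tstar) * (tstar - τ₁) + Ld * (tstar ^ 2 - τ₁ ^ 2) / 2 +
      ((dstar + Ld * tstar) * (τ₂ - tstar) + -Ld * (τ₂ ^ 2 - tstar ^ 2) / 2) =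
      dstar * ((tstar - τ₁) + (τ₂ - tstar)) -
        Ld * ((tstar - τ₁) ^ 2 + (τ₂ - tstar) ^ 2) / 2 := by ring
  have hr2 : r ^ 2 = (tstar - τ₁) ^ 2 + 2 * ((tstar - τ₁) * (τ₂ - tstar)) + (τ₂ - tstar) ^ 2 := by
    rw [← hpq]; ring
  rw [hkey, hpq, hr2]
  clear_value τ₁ τ₂ r
  nlinarith [mul_nonneg hLd.le (mul_nonneg hp hq)]
end

section
/- Let d : ℝ → ℝⁿ be L_d-Lipschitz on [a,b] with b − a = T_p, and let S = sup over a ≤ τ₁ ≤ τ₂ ≤ b of ‖∫_{τ₁}^{τ₂} d(s) ds‖. Let d* = sup_{t ∈ [a,b]} ‖d(t)‖. If S ≤ q and q < (1/2)·L_d·T_p², then d* ≤ √(2·L_d·q). -/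
open MeasureTheory intervalIntegral

private lemma integral_linear (c e p r : ℝ) :
    ∫ s in c..e, (p + r * s) = p * (e - c) + r * (e ^ 2 - c ^ 2) / 2 := by
  rw [intervalIntegral.integral_add (intervalIntegrable_const)
    ((intervalIntegral.intervalIntegrable_id).const_mul r),
    intervalIntegral.integral_const, intervalIntegral.integral_const_mul, integral_id,
    smul_eq_mul]
  ring

theorem stmt_3 (n : ℕ) (d : ℝ → EuclideanSpace ℝ (Fin n))
    (Ld Tp a b q : ℝ) (hLd : 0 < Ld) (hTp : 0 < Tp) (hq : 0 ≤ q)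
    (hd : LipschitzOnWith Ld.toNNReal d (Set.Icc a b))
    (hcont : Continuous d)
    (hab : b - a = Tp)
    (hS : ∀ τ₁ τ₂ : ℝ, a ≤ τ₁ → τ₁ ≤ τ₂ → τ₂ ≤ b →
      ‖∫ s in τ₁..τ₂, d s‖ ≤ q)
    (hcase : q < (1 / 2) * Ld * Tp ^ 2) :
    ∀ t ∈ Set.Icc a b, ‖d t‖ ≤ Real.sqrt (2 * Ld * q) := by
  intro t ht
  obtain ⟨hta, htb⟩ := ht
  set D := ‖d t‖ with hDdef
  have hD0 : 0 ≤ D := norm_nonneg _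
  rcases eq_or_lt_of_le hD0 with h0 | h0
  · rw [← h0]; exact Real.sqrt_nonneg _
  have hlip : ∀ s ∈ Set.Icc a b, ‖d s - d t‖ ≤ Ld * |s - t| := by
    intro s hs
    have := hd.dist_le_mul s hs t ⟨hta, htb⟩
    rwa [dist_eq_norm, Real.dist_eq, Real.coe_toNNReal Ld hLd.le] at this
  -- key inequality
  have key : ∀ τ₁ τ₂ : ℝ, a ≤ τ₁ → τ₁ ≤ t → t ≤ τ₂ → τ₂ ≤ b →
      D * (τ₂ - τ₁) - Ld * ((t - τ₁) ^ 2 + (τ₂ - t) ^ 2) / 2 ≤ q := by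
    intro τ₁ τ₂ h1 h2 h3 h4
    have hint : ∀ c e : ℝ, IntervalIntegrable (fun s => (inner ℝ (d s) (d t) : ℝ))
        volume c e := fun c e => (hcont.inner continuous_const).intervalIntegrable c e
    have heq : (inner ℝ (∫ s in τ₁..τ₂, d s) (d t) : ℝ)
        = ∫ s in τ₁..τ₂, (inner ℝ (d s) (d t) : ℝ) := by
      have := (innerSL ℝ (d t)).intervalIntegral_comp_comm
        (hcont.intervalIntegrable (μ := volume) τ₁ τ₂)
      simp only [innerSL_apply_apply] at this
      rw [real_inner_comm, ← this]
      exact (intervalIntegral.integral_congr (fun s _ => real_inner_comm _ _)).symm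
    have hup : (inner ℝ (∫ s in τ₁..τ₂, d s) (d t) : ℝ) ≤ q * D := by
      refine le_trans (real_inner_le_norm _ _) ?_
      exact mul_le_mul_of_nonneg_right (hS τ₁ τ₂ h1 (h2.trans h3) h4) hD0
    have hpt : ∀ s ∈ Set.Icc a b, D ^ 2 - Ld * D * |s - t| ≤ (inner ℝ (d s) (d t) : ℝ) := by
      intro s hs
      have h5 : ‖d s - d t‖ ≤ Ld * |s - t| := hlip s hs
      have h6 : (inner ℝ (d s - d t) (d t) : ℝ) ≥ -(‖d s - d t‖ * ‖d t‖) := by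
        have := abs_real_inner_le_norm (d s - d t) (d t)
        linarith [neg_abs_le (inner ℝ (d s - d t) (d t) : ℝ)]
      have h7 : (inner ℝ (d s) (d t) : ℝ) = D ^ 2 + (inner ℝ (d s - d t) (d t) : ℝ) := by
        rw [inner_sub_left, real_inner_self_eq_norm_sq]; ring
      have h8 : ‖d s - d t‖ * ‖d t‖ ≤ Ld * |s - t| * D :=
        mul_le_mul_of_nonneg_right h5 hD0
      rw [h7]; nlinarith
    have hsplit : (∫ s in τ₁..τ₂, (inner ℝ (d s) (d t) : ℝ))
        = (∫ s in τ₁..t, (inner ℝ (d s) (d t) : ℝ)) + ∫ s in t..τ₂, (inner ℝ (d s) (d t) : ℝ) :=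
      (intervalIntegral.integral_add_adjacent_intervals (hint τ₁ t) (hint t τ₂)).symm
    have hleft : D ^ 2 * (t - τ₁) - Ld * D * (t - τ₁) ^ 2 / 2
        ≤ ∫ s in τ₁..t, (inner ℝ (d s) (d t) : ℝ) := by
      have hmono := intervalIntegral.integral_mono_on (μ := volume)
        (f := fun s : ℝ => (D ^ 2 - Ld * D * t) + (Ld * D) * s)
        (g := fun s : ℝ => (inner ℝ (d s) (d t) : ℝ)) h2
        ((continuous_const.add (continuous_const.mul continuous_id')).intervalIntegrable τ₁ t)
        (hint τ₁ t)
        (fun s hs => by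
          have hsab : s ∈ Set.Icc a b := ⟨h1.trans hs.1, (hs.2.trans h3).trans h4⟩
          have habs : |s - t| = t - s := by
            rw [abs_of_nonpos (by linarith [hs.2])]; ring
          have := hpt s hsab
          rw [habs] at this
          linarith)
      rw [integral_linear] at hmono
      linarith
    have hright : D ^ 2 * (τ₂ - t) - Ld * D * (τ₂ - t) ^ 2 / 2
        ≤ ∫ s in t..τ₂, (inner ℝ (d s) (d t) : ℝ) := by
      have hmono := intervalIntegral.integral_mono_on (μ := volume)
        (f := fun s : ℝ => (D ^ 2 + Ld * D * t) + (-(Ld * D)) * s)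
        (g := fun s : ℝ => (inner ℝ (d s) (d t) : ℝ)) h3
        ((continuous_const.add (continuous_const.mul continuous_id')).intervalIntegrable t τ₂)
        (hint t τ₂)
        (fun s hs => by
          have hsab : s ∈ Set.Icc a b := ⟨h1.trans (h2.trans hs.1), hs.2.trans h4⟩
          have habs : |s - t| = s - t := abs_of_nonneg (by linarith [hs.1])
          have := hpt s hsab
          rw [habs] at this
          linarith)
      rw [integral_linear] at hmono
      linarith
    have hdown : (D * (τ₂ - τ₁) - Ld * ((t - τ₁) ^ 2 + (τ₂ - t) ^ 2) / 2) * D ≤ q * D := by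
      calc (D * (τ₂ - τ₁) - Ld * ((t - τ₁) ^ 2 + (τ₂ - t) ^ 2) / 2) * D
          = (D ^ 2 * (t - τ₁) - Ld * D * (t - τ₁) ^ 2 / 2)
            + (D ^ 2 * (τ₂ - t) - Ld * D * (τ₂ - t) ^ 2 / 2) := by ring
        _ ≤ (∫ s in τ₁..t, (inner ℝ (d s) (d t) : ℝ)) + ∫ s in t..τ₂, (inner ℝ (d s) (d t) : ℝ) :=
            add_le_add hleft hright
        _ = (inner ℝ (∫ s in τ₁..τ₂, d s) (d t) : ℝ) := by rw [heq, hsplit]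
        _ ≤ q * D := hup
    exact le_of_mul_le_mul_right hdown h0
  -- case analysis
  set r := D / Ld with hrdef
  have hr0 : 0 < r := div_pos h0 hLd
  have hLr : Ld * r = D := by rw [hrdef]; field_simp [hLd.ne']
  have hfinish : D ^ 2 ≤ 2 * Ld * q → D ≤ Real.sqrt (2 * Ld * q) :=
    fun h => Real.le_sqrt_of_sq_le h
  have hDr2q : D * r ≤ 2 * q → D ≤ Real.sqrt (2 * Ld * q) := by
    intro h6
    apply hfinish
    have h7 : D ^ 2 = Ld * (D * r) := by
      rw [← mul_assoc, mul_comm Ld D, mul_assoc, hLr, pow_two]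
    rw [h7]
    calc Ld * (D * r) ≤ Ld * (2 * q) := mul_le_mul_of_nonneg_left h6 hLd.le
      _ = 2 * Ld * q := by ring
  have hLr2 : Ld * r ^ 2 = D * r := by rw [pow_two, ← mul_assoc, hLr]
  clear_value D r
  by_cases h1 : r ≤ t - a
  · have hk := key (t - r) t (by linarith) (by linarith) le_rfl htb
    exact hDr2q (by linarith [hk, hLr2])
  · by_cases h2 : r ≤ b - t
    · have hk := key t (t + r) hta le_rfl (by linarith) (by linarith)
      exact hDr2q (by linarith [hk, hLr2])
    · push_neg at h1 h2
      have hk := key a b le_rfl hta htb le_rfl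
      have hk' : D * Tp - Ld * ((t - a) ^ 2 + (b - t) ^ 2) / 2 ≤ q := by
        rw [← hab]; exact hk
      set α := t - a with hα
      set β := b - t with hβ
      have hαβ : α + β = Tp := by rw [hα, hβ]; linarith
      have hα0 : 0 ≤ α := by rw [hα]; linarith
      have hβ0 : 0 ≤ β := by rw [hβ]; linarith
      clear_value α β
      by_cases h3 : r ≤ Tp
      · apply hDr2q
        have e1 : α ^ 2 ≤ α * r := by
          rw [pow_two]; exact mul_le_mul_of_nonneg_left h1.le hα0
        have e2 : β ^ 2 ≤ β * r := by
          rw [pow_two]; exact mul_le_mul_of_nonneg_left h2.le hβ0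
        have e0 : Tp * r = α * r + β * r := by rw [← hαβ]; ring
        have e3 : Ld * (α ^ 2 + β ^ 2) ≤ Ld * (Tp * r) :=
          mul_le_mul_of_nonneg_left (by linarith) hLd.le
        have e4 : Ld * (Tp * r) = D * Tp := by
          rw [mul_comm Tp r, ← mul_assoc, hLr]
        have e5 : D * Tp / 2 ≤ q := by linarith
        have e6 : D * r ≤ D * Tp := mul_le_mul_of_nonneg_left h3 hD0
        linarith
      · exfalso
        push_neg at h3
        have hDL : Ld * Tp < D := by
          calc Ld * Tp < Ld * r := mul_lt_mul_of_pos_left h3 hLd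
            _ = D := hLr
        have hαTp : α ≤ Tp := by linarith
        have hβTp : β ≤ Tp := by linarith
        have e1a : α ^ 2 ≤ α * Tp := by
          rw [pow_two]; exact mul_le_mul_of_nonneg_left hαTp hα0
        have e1b : β ^ 2 ≤ β * Tp := by
          rw [pow_two]; exact mul_le_mul_of_nonneg_left hβTp hβ0
        have e0 : α * Tp + β * Tp = Tp ^ 2 := by rw [pow_two, ← hαβ]; ring
        have e1 : α ^ 2 + β ^ 2 ≤ Tp ^ 2 := by linarith
        have e2 : Ld * (α ^ 2 + β ^ 2) ≤ Ld * Tp ^ 2 :=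
          mul_le_mul_of_nonneg_left e1 hLd.le
        have e3 : Ld * Tp * Tp < D * Tp := mul_lt_mul_of_pos_right hDL hTp
        have e4 : Ld * Tp * Tp = Ld * Tp ^ 2 := by ring
        linarith
end

section
/- Let d : ℝ → ℝⁿ be L_d-Lipschitz on [a,b] with b − a = T_p, let S be the supremum integral score over [a,b], and let q ≥ 0. Define d̄ = √(2·L_d·q) if q < (1/2)·L_d·T_p², and d̄ = q/T_p + (1/2)·L_d·T_p otherwise. If S ≤ q then ‖d(t)‖ ≤ d̄ for all t ∈ [a,b]. -/
open MeasureTheory intervalIntegral Set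
open scoped RealInnerProductSpace

private lemma interval_integral_inner {n : ℕ} (f : ℝ → EuclideanSpace ℝ (Fin n))
    (hf : Continuous f) (c : EuclideanSpace ℝ (Fin n)) (a b : ℝ) :
    ⟪c, ∫ x in a..b, f x⟫ = ∫ x in a..b, ⟪c, f x⟫ := by
  simp only [intervalIntegral, inner_sub_right]
  rw [integral_inner (hf.integrableOn_Ioc), integral_inner (hf.integrableOn_Ioc)]

private lemma integral_linear_right (A B t c : ℝ) :
    ∫ s in t..c, (A - B * (s - t)) = A * (c - t) - B * ((c - t) ^ 2 / 2) := by
  have h1 : (∫ s in t..c, (s - t)) = (c - t) ^ 2 / 2 := by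
    rw [intervalIntegral.integral_comp_sub_right (fun x => x) t]
    simp [integral_id]
  have hi1 : IntervalIntegrable (fun s : ℝ => B * (s - t)) volume t c :=
    (by fun_prop : Continuous fun s : ℝ => B * (s - t)).intervalIntegrable _ _
  rw [intervalIntegral.integral_sub (intervalIntegrable_const) hi1,
    intervalIntegral.integral_const, intervalIntegral.integral_const_mul, h1]
  simp only [smul_eq_mul]
  ring

private lemma integral_linear_left (A B t c : ℝ) :
    ∫ s in c..t, (A - B * (t - s)) = A * (t - c) - B * ((t - c) ^ 2 / 2) := by
  have h1 : (∫ s in c..t, (t - s)) = (t - c) ^ 2 / 2 := by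
    rw [intervalIntegral.integral_comp_sub_left (fun x => x) t]
    simp [integral_id]
  have hi1 : IntervalIntegrable (fun s : ℝ => B * (t - s)) volume c t :=
    (by fun_prop : Continuous fun s : ℝ => B * (t - s)).intervalIntegrable _ _
  rw [intervalIntegral.integral_sub (intervalIntegrable_const) hi1,
    intervalIntegral.integral_const, intervalIntegral.integral_const_mul, h1]
  simp only [smul_eq_mul]
  ring

private lemma aux_case2 (Ld Tp q D : ℝ) (hLd : 0 < Ld) (hTp : 0 < Tp) (hq : 0 ≤ q)
    (hD : 0 ≤ D) (h : D ^ 2 ≤ 2 * Ld * q) : D * Tp ≤ q + Ld * Tp ^ 2 / 2 := by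
  have h1 : (D * Tp) ^ 2 ≤ (q + Ld * Tp ^ 2 / 2) ^ 2 := by
    nlinarith [mul_le_mul_of_nonneg_right h (sq_nonneg Tp), sq_nonneg (q - Ld * Tp ^ 2 / 2)]
  exact le_of_pow_le_pow_left₀ two_ne_zero (by positivity) h1

set_option maxHeartbeats 1600000 in
theorem stmt_6 (n : ℕ) (d : ℝ → EuclideanSpace ℝ (Fin n))
    (Ld Tp a b q : ℝ) (hLd : 0 < Ld) (hTp : 0 < Tp) (hq : 0 ≤ q)
    (hd : LipschitzOnWith Ld.toNNReal d (Set.Icc a b))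
    (hcont : Continuous d)
    (hab : b - a = Tp)
    (hS : ∀ τ₁ τ₂ : ℝ, a ≤ τ₁ → τ₁ ≤ τ₂ → τ₂ ≤ b →
      ‖∫ s in τ₁..τ₂, d s‖ ≤ q) :
    ∀ t ∈ Set.Icc a b, ‖d t‖ ≤
      (if q < (1 / 2) * Ld * Tp ^ 2 then Real.sqrt (2 * Ld * q)
       else q / Tp + (1 / 2) * Ld * Tp) := by
  intro t ht
  set D : ℝ := ‖d t‖ with hD
  rcases eq_or_lt_of_le (norm_nonneg (d t)) with hD0 | hD0
  · rw [show D = 0 from hD.trans hD0.symm]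
    split_ifs
    · exact Real.sqrt_nonneg _
    · positivity
  -- D > 0 case
  have hta : a ≤ t := ht.1
  have htb : t ≤ b := ht.2
  set ℓ : ℝ := D / Ld with hℓ
  have hℓ0 : 0 < ℓ := div_pos hD0 hLd
  set α : ℝ := min (t - a) ℓ with hα
  set β : ℝ := min (b - t) ℓ with hβ
  have hα0 : 0 ≤ α := le_min (by linarith) hℓ0.le
  have hβ0 : 0 ≤ β := le_min (by linarith) hℓ0.le
  have hαℓ : α ≤ ℓ := min_le_right _ _
  have hβℓ : β ≤ ℓ := min_le_right _ _
  have hc₁a : a ≤ t - α := by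
    have : α ≤ t - a := min_le_left _ _
    linarith
  have hc₂b : t + β ≤ b := by
    have : β ≤ b - t := min_le_left _ _
    linarith
  -- pointwise lower bound on inner products
  have hpt : ∀ s ∈ Set.Icc a b, D ^ 2 - Ld * D * |s - t| ≤ ⟪d t, d s⟫ := by
    intro s hs
    have hlip : ‖d s - d t‖ ≤ Ld * |s - t| := by
      have h := hd.dist_le_mul s hs t ht
      rw [Real.coe_toNNReal _ hLd.le] at h
      rwa [dist_eq_norm, Real.dist_eq] at h
    have h1 : ⟪d t, d s - d t⟫ ≥ -(‖d t‖ * ‖d s - d t‖) := by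
      have := abs_real_inner_le_norm (d t) (d s - d t)
      have := neg_abs_le ⟪d t, d s - d t⟫
      linarith
    have h2 : ⟪d t, d s⟫ = ⟪d t, d t⟫ + ⟪d t, d s - d t⟫ := by
      rw [← inner_add_right]
      congr 1
      abel
    rw [h2, real_inner_self_eq_norm_sq]
    have h3 : ‖d t‖ * ‖d s - d t‖ ≤ D * (Ld * |s - t|) :=
      mul_le_mul_of_nonneg_left hlip (norm_nonneg _)
    nlinarith [norm_nonneg (d s - d t)]
  -- right side bound
  have hright : D ^ 2 * β - Ld * D * (β ^ 2 / 2) ≤ ⟪d t, ∫ s in t..(t + β), d s⟫ := by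
    rw [interval_integral_inner d hcont]
    have hmono : (∫ s in t..(t + β), (D ^ 2 - Ld * D * (s - t))) ≤
        ∫ s in t..(t + β), ⟪d t, d s⟫ := by
      apply intervalIntegral.integral_mono_on (by linarith)
      · exact (by fun_prop : Continuous fun s : ℝ => D ^ 2 - Ld * D * (s - t)).intervalIntegrable _ _
      · exact (Continuous.inner continuous_const hcont).intervalIntegrable _ _
      · intro s hs
        have hs' : s ∈ Set.Icc a b := ⟨le_trans hta hs.1, le_trans hs.2 hc₂b⟩
        have habs : |s - t| = s - t := abs_of_nonneg (by linarith [hs.1])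
        have := hpt s hs'
        rw [habs] at this
        linarith
    rw [integral_linear_right] at hmono
    have : t + β - t = β := by ring
    rw [this] at hmono
    linarith
  -- left side bound
  have hleft : D ^ 2 * α - Ld * D * (α ^ 2 / 2) ≤ ⟪d t, ∫ s in (t - α)..t, d s⟫ := by
    rw [interval_integral_inner d hcont]
    have hmono : (∫ s in (t - α)..t, (D ^ 2 - Ld * D * (t - s))) ≤
        ∫ s in (t - α)..t, ⟪d t, d s⟫ := by
      apply intervalIntegral.integral_mono_on (by linarith)
      · exact (by fun_prop : Continuous fun s : ℝ => D ^ 2 - Ld * D * (t - s)).intervalIntegrable _ _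
      · exact (Continuous.inner continuous_const hcont).intervalIntegrable _ _
      · intro s hs
        have hs' : s ∈ Set.Icc a b := ⟨le_trans hc₁a hs.1, le_trans hs.2 htb⟩
        have habs : |s - t| = t - s := by
          rw [abs_sub_comm]; exact abs_of_nonneg (by linarith [hs.2])
        have := hpt s hs'
        rw [habs] at this
        linarith
    rw [integral_linear_left] at hmono
    have : t - (t - α) = α := by ring
    rw [this] at hmono
    linarith
  -- combine
  have hsplit : (∫ s in (t - α)..t, d s) + (∫ s in t..(t + β), d s)
      = ∫ s in (t - α)..(t + β), d s :=
    intervalIntegral.integral_add_adjacent_intervals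
      (hcont.intervalIntegrable _ _) (hcont.intervalIntegrable _ _)
  have hqD : ⟪d t, ∫ s in (t - α)..(t + β), d s⟫ ≤ D * q := by
    calc ⟪d t, ∫ s in (t - α)..(t + β), d s⟫
        ≤ ‖d t‖ * ‖∫ s in (t - α)..(t + β), d s‖ := real_inner_le_norm _ _
      _ ≤ D * q := by
          apply mul_le_mul_of_nonneg_left _ (norm_nonneg _)
          exact hS _ _ hc₁a (by linarith) hc₂b
  have hsum : D ^ 2 * α - Ld * D * (α ^ 2 / 2) + (D ^ 2 * β - Ld * D * (β ^ 2 / 2))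
      ≤ D * q := by
    have := inner_add_right (𝕜 := ℝ) (d t) (∫ s in (t - α)..t, d s) (∫ s in t..(t + β), d s)
    rw [hsplit] at this
    linarith [hqD, hleft, hright, this.ge, this.le]
  -- divide by D
  rw [← hD] at hD0
  have hLdℓ : Ld * ℓ = D := by
    rw [hℓ]; field_simp
  have hαD : Ld * α ≤ D := by
    rw [← hLdℓ]; exact mul_le_mul_of_nonneg_left hαℓ hLd.le
  have hβD : Ld * β ≤ D := by
    rw [← hLdℓ]; exact mul_le_mul_of_nonneg_left hβℓ hLd.le
  have hcaseAB : (α = ℓ ∨ β = ℓ) ∨ (α = t - a ∧ β = b - t) := by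
    by_cases hc : ℓ ≤ t - a ∨ ℓ ≤ b - t
    · rcases hc with h | h
      · exact Or.inl (Or.inl (min_eq_right h))
      · exact Or.inl (Or.inr (min_eq_right h))
    · push_neg at hc
      exact Or.inr ⟨min_eq_left hc.1.le, min_eq_left hc.2.le⟩
  clear hpt hright hleft hsplit hqD hS hd hcont
  clear_value D ℓ α β
  have hkey : D * α - Ld * (α ^ 2 / 2) + (D * β - Ld * (β ^ 2 / 2)) ≤ q := by
    have h2 : D * (D * α - Ld * (α ^ 2 / 2) + (D * β - Ld * (β ^ 2 / 2))) ≤ D * q := by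
      ring_nf at hsum ⊢
      linarith [hsum]
    exact le_of_mul_le_mul_left h2 hD0
  clear hsum
  have hAcase : ∀ x : ℝ, 0 ≤ x → Ld * x ≤ D →
      D * ℓ - Ld * (ℓ ^ 2 / 2) + (D * x - Ld * (x ^ 2 / 2)) ≤ q → D ^ 2 ≤ 2 * Ld * q := by
    intro x hx0 hxD hk
    have hpos : 0 ≤ D * x - Ld * (x ^ 2 / 2) := by
      nlinarith [mul_nonneg hx0 (sub_nonneg.2 hxD), mul_nonneg hLd.le (sq_nonneg x)]
    have e : D * ℓ - Ld * (ℓ ^ 2 / 2) = D ^ 2 / (2 * Ld) := by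
      rw [hℓ]; field_simp; ring
    have h7 : D ^ 2 / (2 * Ld) ≤ q := by linarith
    have := (div_le_iff₀ (by positivity : (0:ℝ) < 2 * Ld)).mp h7
    linarith
  have hfacts : (q ≤ 1 / 2 * Ld * Tp ^ 2 → D ^ 2 ≤ 2 * Ld * q) ∧
      D * Tp ≤ q + Ld * Tp ^ 2 / 2 := by
    rcases hcaseAB with (hαe | hβe) | ⟨hαe, hβe⟩
    · -- α = ℓ
      have hD2 : D ^ 2 ≤ 2 * Ld * q := by
        rw [hαe] at hkey
        exact hAcase β hβ0 hβD hkey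
      exact ⟨fun _ => hD2, aux_case2 Ld Tp q D hLd hTp hq hD0.le hD2⟩
    · -- β = ℓ
      have hD2 : D ^ 2 ≤ 2 * Ld * q := by
        rw [hβe] at hkey
        exact hAcase α hα0 hαD (by linarith)
      exact ⟨fun _ => hD2, aux_case2 Ld Tp q D hLd hTp hq hD0.le hD2⟩
    · have hsumαβ : α + β = Tp := by rw [hαe, hβe]; linarith
      have hsq1 : α ^ 2 + β ^ 2 ≤ Tp * ℓ := by
        nlinarith [mul_nonneg hα0 (sub_nonneg.2 hαℓ), mul_nonneg hβ0 (sub_nonneg.2 hβℓ)]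
      have hsq2 : α ^ 2 + β ^ 2 ≤ Tp ^ 2 := by
        nlinarith [mul_nonneg hα0 hβ0]
      have hm1 : Ld * (α ^ 2 + β ^ 2) ≤ Ld * (Tp * ℓ) :=
        mul_le_mul_of_nonneg_left hsq1 hLd.le
      have hm2 : Ld * (α ^ 2 + β ^ 2) ≤ Ld * Tp ^ 2 :=
        mul_le_mul_of_nonneg_left hsq2 hLd.le
      have e3 : Ld * (Tp * ℓ) = Tp * D := by rw [← hLdℓ]; ring
      have e4 : D * (α + β) = D * Tp := by rw [hsumαβ]
      have hB2 : D * Tp ≤ 2 * q := by nlinarith [hkey, hm1, e3, e4]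
      have hB1 : D * Tp ≤ q + Ld * Tp ^ 2 / 2 := by nlinarith [hkey, hm2, e4]
      refine ⟨fun hqle => ?_, hB1⟩
      have h4 : D * Tp * (D * Tp) ≤ 2 * q * (2 * q) :=
        mul_self_le_mul_self (mul_nonneg hD0.le hTp.le) hB2
      have h5 : 2 * q ≤ Ld * Tp ^ 2 := by linarith
      have h6 : 2 * q * (2 * q) ≤ 2 * q * (Ld * Tp ^ 2) :=
        mul_le_mul_of_nonneg_left h5 (by linarith)
      nlinarith [h4, h6, mul_pos hTp hTp]
  obtain ⟨hfact1, hfact2⟩ := hfacts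
  split_ifs with hcase2
  · exact Real.le_sqrt_of_sq_le (hfact1 hcase2.le)
  · rw [div_add' _ _ _ hTp.ne', le_div_iff₀ hTp]
    nlinarith [hfact2]
end

section
/- Consider the OCP update q_{k+1} = q_k + η·(𝟙(S_k > q_k) − α) with fixed step size η > 0, α ∈ (0,1), scores S_k ∈ [0, B], and q_1 ∈ [−η, B + η]. Then for all K ≥ 1, |(1/K)·Σ_{k=1}^K 𝟙(S_k ≤ q_k) − (1 − α)| ≤ (B + 2η)/(η·K). -/
theorem stmt_9 (α η B : ℝ) (hα : α ∈ Set.Ioo (0 : ℝ) 1) (hη : 0 < η) (hB : 0 < B)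
    (S q : ℕ → ℝ) (hS : ∀ k, S k ∈ Set.Icc 0 B)
    (hrec : ∀ k, q (k + 1) = q k + η * ((if S k > q k then (1 : ℝ) else 0) - α))
    (hq1 : q 1 ∈ Set.Icc (-η) (B + η)) :
    ∀ K : ℕ, 1 ≤ K →
      |(1 / (K : ℝ)) * (∑ k ∈ Finset.Icc 1 K, (if S k ≤ q k then (1 : ℝ) else 0))
        - (1 - α)| ≤ (B + 2 * η) / (η * K) := by
  obtain ⟨hα0, hα1⟩ := hα
  have hinv : ∀ k, 1 ≤ k → q k ∈ Set.Icc (-η) (B + η) := by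
    intro k hk
    induction k with
    | zero => omega
    | succ n ih =>
      by_cases hn : n = 0
      · subst hn; exact hq1
      · obtain ⟨h1, h2⟩ := ih (by omega)
        obtain ⟨hS0, hSB⟩ := hS n
        rw [hrec n]
        constructor <;> split_ifs with h <;> nlinarith
  have htel : ∀ K : ℕ, q (K + 1) = q 1 +
      ∑ k ∈ Finset.Icc 1 K, η * ((if S k > q k then (1 : ℝ) else 0) - α) := by
    intro K
    induction K with
    | zero => simp
    | succ n ih =>
      rw [Finset.sum_Icc_succ_top (by omega), hrec (n + 1), ih]
      ring
  intro K hK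
  have hK0 : (0 : ℝ) < K := by exact_mod_cast Nat.pos_of_ne_zero (by omega)
  set T : ℝ := ∑ k ∈ Finset.Icc 1 K, (if S k > q k then (1 : ℝ) else 0) with hT
  have hsum : ∑ k ∈ Finset.Icc 1 K, (if S k ≤ q k then (1 : ℝ) else 0) = K - T := by
    have hc : ∀ k ∈ Finset.Icc 1 K, ((if S k ≤ q k then (1 : ℝ) else 0)) =
        1 - (if S k > q k then (1 : ℝ) else 0) := by
      intro k _
      by_cases h : S k > q k
      · simp [h, not_le.mpr h]
      · simp [h, not_lt.mp h]
    rw [Finset.sum_congr rfl hc, Finset.sum_sub_distrib, ← hT, Finset.sum_const,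
      Nat.card_Icc, nsmul_eq_mul]
    have hKc : K + 1 - 1 = K := by omega
    rw [hKc]; ring
  have key : η * (T - K * α) = q (K + 1) - q 1 := by
    have h := htel K
    have h2 : ∑ k ∈ Finset.Icc 1 K, η * ((if S k > q k then (1 : ℝ) else 0) - α)
        = η * T - K * (η * α) := by
      simp only [mul_sub, Finset.sum_sub_distrib, ← Finset.mul_sum, ← hT,
        Finset.sum_const, Nat.card_Icc, nsmul_eq_mul]
      have hKc : K + 1 - 1 = K := by omega
      rw [hKc]; ring
    rw [h, h2]; ring
  have hqb := hinv (K + 1) (by omega)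
  obtain ⟨a, b⟩ := hqb
  obtain ⟨c, d⟩ := hq1
  have habs : |T - K * α| ≤ (B + 2 * η) / η := by
    have hTeq : T - K * α = (q (K + 1) - q 1) / η := by
      field_simp; linarith [key]
    rw [hTeq, abs_div, abs_of_pos hη]
    have : |q (K + 1) - q 1| ≤ B + 2 * η := by
      rw [abs_le]; constructor <;> linarith
    gcongr
  have hrewrite : (1 / (K : ℝ)) * (K - T) - (1 - α) = -((T - K * α) / K) := by
    field_simp; ring
  rw [hsum, hrewrite, abs_neg, abs_div, abs_of_pos hK0, show η * (K : ℝ) = η * K from rfl,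
    ← div_div]
  gcongr
end

section
/- Under the OCP update with constant step size η > 0 and bounded scores S_k ∈ [0,B], the empirical coverage converges: lim_{K→∞} (1/K)·Σ_{k=1}^K 𝟙(S_k ≤ q_k) = 1 − α. -/
open Filter

theorem stmt_10 (α η B : ℝ) (hα : α ∈ Set.Ioo (0 : ℝ) 1) (hη : 0 < η) (hB : 0 < B)
    (S q : ℕ → ℝ) (hS : ∀ k, S k ∈ Set.Icc 0 B)
    (hrec : ∀ k, q (k + 1) = q k + η * ((if S k > q k then (1 : ℝ) else 0) - α))
    (hq1 : q 1 ∈ Set.Icc (-η) (B + η)) :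
    Tendsto (fun K : ℕ =>
        (1 / (K : ℝ)) * (∑ k ∈ Finset.Icc 1 K, (if S k ≤ q k then (1 : ℝ) else 0)))
      atTop (nhds (1 - α)) := by
  obtain ⟨hα0, hα1⟩ := hα
  set χ : ℕ → ℝ := fun k => if S k > q k then (1 : ℝ) else 0 with hχ
  have tel : ∀ K : ℕ, η * (∑ k ∈ Finset.Icc 1 K, (χ k - α)) = q (K + 1) - q 1 := by
    intro K
    induction K with
    | zero => simp
    | succ n ih =>
      rw [Finset.sum_Icc_succ_top (by omega : 1 ≤ n + 1), mul_add, ih, hrec (n + 1)]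
      ring
  have hqbd : ∀ k, 1 ≤ k → q k ∈ Set.Icc (-η) (B + η) := by
    intro k hk
    induction k with
    | zero => omega
    | succ n ih =>
      rcases Nat.eq_zero_or_pos n with h | h
      · subst h; exact hq1
      · obtain ⟨hl, hu⟩ := ih h
        obtain ⟨hS0, hSB⟩ := hS n
        rw [hrec n]
        by_cases hc : S n > q n
        · rw [if_pos hc]
          constructor
          · nlinarith
          · nlinarith
        · rw [if_neg hc]
          push_neg at hc
          constructor
          · nlinarith
          · nlinarith
  have hsum : ∀ K : ℕ, (∑ k ∈ Finset.Icc 1 K, (if S k ≤ q k then (1 : ℝ) else 0))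
      = (K : ℝ) - α * K - (q (K + 1) - q 1) / η := by
    intro K
    have h1 : ∀ k ∈ Finset.Icc 1 K, (if S k ≤ q k then (1 : ℝ) else 0)
        = (1 - α) - (χ k - α) := by
      intro k _
      by_cases h : S k ≤ q k
      · simp [hχ, h, not_lt.2 h]
      · push_neg at h
        simp [hχ, h, not_le.2 h]
    rw [Finset.sum_congr rfl h1, Finset.sum_sub_distrib, Finset.sum_const]
    have := tel K
    have hη' : η ≠ 0 := ne_of_gt hη
    have hsum2 : (∑ k ∈ Finset.Icc 1 K, (χ k - α)) = (q (K + 1) - q 1) / η := by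
      rw [eq_div_iff hη']
      linarith [tel K]
    rw [hsum2]
    have hcard : (Finset.Icc 1 K).card = K := by simp
    rw [hcard]
    push_cast
    ring
  have hzero : Tendsto (fun K : ℕ => (q (K + 1) - q 1) / (η * K)) atTop (nhds 0) := by
    have hb : ∀ᶠ K : ℕ in atTop, ‖(q (K + 1) - q 1) / (η * K)‖ ≤ ((B + 2 * η) / η) * (1 / K) := by
      filter_upwards [eventually_ge_atTop 1] with K hK
      have hKpos : (0 : ℝ) < K := by exact_mod_cast hK
      obtain ⟨h1l, h1u⟩ := hq1
      obtain ⟨h2l, h2u⟩ := hqbd (K + 1) (by omega)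
      have hnum : |q (K + 1) - q 1| ≤ B + 2 * η := by
        rw [abs_le]; constructor <;> linarith
      rw [Real.norm_eq_abs, abs_div]
      rw [abs_of_pos (by positivity : (0:ℝ) < η * K)]
      rw [div_le_iff₀ (by positivity)]
      calc |q (K + 1) - q 1| ≤ B + 2 * η := hnum
        _ = ((B + 2 * η) / η) * (1 / K) * (η * K) := by field_simp
    have hlim : Tendsto (fun K : ℕ => ((B + 2 * η) / η) * (1 / K)) atTop (nhds 0) := by
      have := tendsto_one_div_atTop_nhds_zero_nat.const_mul ((B + 2 * η) / η)
      simpa using this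
    exact squeeze_zero_norm' hb hlim
  have hmain : Tendsto (fun K : ℕ => (1 - α) - (q (K + 1) - q 1) / (η * K)) atTop
      (nhds (1 - α)) := by
    simpa using tendsto_const_nhds.sub hzero
  refine hmain.congr' ?_
  filter_upwards [eventually_ge_atTop 1] with K hK
  have hKpos : (0 : ℝ) < K := by exact_mod_cast hK
  rw [hsum K]
  field_simp
end

section
/- Let g : ℝ → ℝ be L_d-Lipschitz with g(t*) = d* ≥ 0 for t* ∈ [a,b], b − a = T_p. Then sup over a ≤ τ₁ ≤ τ₂ ≤ b of ∫_{τ₁}^{τ₂} g(s) ds ≥ min( (d*)²/(2 L_d), d*·T_p − (1/2)·L_d·T_p² ). -/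
open MeasureTheory intervalIntegral

lemma lin_int (p q u v : ℝ) :
    ∫ s in u..v, (p + q * s) = p * (v - u) + q * (v ^ 2 - u ^ 2) / 2 := by
  have h1 : IntervalIntegrable (fun _ : ℝ => p) volume u v := intervalIntegrable_const
  have h2 : IntervalIntegrable (fun s : ℝ => q * s) volume u v :=
    (continuous_const.mul continuous_id).intervalIntegrable _ _
  rw [intervalIntegral.integral_add h1 h2, intervalIntegral.integral_const,
    intervalIntegral.integral_const_mul, integral_id]
  simp; ring

set_option maxHeartbeats 1000000 in
theorem stmt_19 (g : ℝ → ℝ) (Ld Tp a b tstar dstar : ℝ)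
    (hLd : 0 < Ld) (hTp : 0 < Tp)
    (hg : LipschitzWith Ld.toNNReal g)
    (hts : tstar ∈ Set.Icc a b) (hval : g tstar = dstar) (hd0 : 0 ≤ dstar)
    (hab : b - a = Tp) :
    min (dstar ^ 2 / (2 * Ld)) (dstar * Tp - (1 / 2) * Ld * Tp ^ 2) ≤
      sSup {r : ℝ | ∃ τ₁ τ₂ : ℝ, a ≤ τ₁ ∧ τ₁ ≤ τ₂ ∧ τ₂ ≤ b ∧
        r = ∫ s in τ₁..τ₂, g s} := by
  obtain ⟨hta, htb⟩ := hts
  have hgc : Continuous g := hg.continuous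
  have hLip : ∀ x y : ℝ, |g x - g y| ≤ Ld * |x - y| := by
    intro x y
    have := hg.dist_le_mul x y
    rwa [Real.dist_eq, Real.dist_eq, Real.coe_toNNReal _ hLd.le] at this
  -- pointwise lower bound
  have key : ∀ x : ℝ, dstar - Ld * |tstar - x| ≤ g x := by
    intro x
    have h := hLip tstar x
    have := abs_le.mp h
    linarith [this.1, this.2, hval ▸ this.1]
  set c := dstar / Ld with hcdef
  have hc0 : 0 ≤ c := div_nonneg hd0 hLd.le
  set τ₁ := max a (tstar - c) with hτ1def
  set τ₂ := min b (tstar + c) with hτ2def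
  have ha1 : a ≤ τ₁ := le_max_left _ _
  have hτ1t : τ₁ ≤ tstar := max_le hta (by linarith)
  have hτ2t : tstar ≤ τ₂ := le_min htb (by linarith)
  have hτ2b : τ₂ ≤ b := min_le_left _ _
  set xL := tstar - τ₁ with hxL
  set xR := τ₂ - tstar with hxR
  have hxL0 : 0 ≤ xL := by linarith
  have hxR0 : 0 ≤ xR := by linarith
  have hxLc : xL ≤ c := by
    have : tstar - c ≤ τ₁ := le_max_right _ _
    simp only [hxL]; linarith
  have hxRc : xR ≤ c := by
    have : τ₂ ≤ tstar + c := min_le_right _ _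
    simp only [hxR]; linarith
  -- integral lower bounds on each side
  have hI1 : dstar * xL - Ld * xL ^ 2 / 2 ≤ ∫ s in τ₁..tstar, g s := by
    have hmono : ∫ s in τ₁..tstar, ((dstar - Ld * tstar) + Ld * s) ≤ ∫ s in τ₁..tstar, g s := by
      apply intervalIntegral.integral_mono_on hτ1t
      · exact ((continuous_const.add (continuous_const.mul continuous_id)).intervalIntegrable _ _)
      · exact hgc.intervalIntegrable _ _
      · intro s hs
        have h1 := key s
        have : |tstar - s| = tstar - s := abs_of_nonneg (by linarith [hs.2])
        rw [this] at h1
        linarith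
    rw [lin_int] at hmono
    nlinarith [hmono]
  have hI2 : dstar * xR - Ld * xR ^ 2 / 2 ≤ ∫ s in tstar..τ₂, g s := by
    have hmono : ∫ s in tstar..τ₂, ((dstar + Ld * tstar) + (-Ld) * s) ≤ ∫ s in tstar..τ₂, g s := by
      apply intervalIntegral.integral_mono_on hτ2t
      · exact ((continuous_const.add (continuous_const.mul continuous_id)).intervalIntegrable _ _)
      · exact hgc.intervalIntegrable _ _
      · intro s hs
        have h1 := key s
        have : |tstar - s| = s - tstar := by
          rw [abs_sub_comm]; exact abs_of_nonneg (by linarith [hs.1])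
        rw [this] at h1
        linarith
    rw [lin_int] at hmono
    nlinarith [hmono]
  have hsplit : (∫ s in τ₁..tstar, g s) + (∫ s in tstar..τ₂, g s) = ∫ s in τ₁..τ₂, g s :=
    intervalIntegral.integral_add_adjacent_intervals (hgc.intervalIntegrable _ _)
      (hgc.intervalIntegrable _ _)
  -- the witness is in the set
  have hmem : (∫ s in τ₁..τ₂, g s) ∈ {r : ℝ | ∃ τ₁ τ₂ : ℝ, a ≤ τ₁ ∧ τ₁ ≤ τ₂ ∧ τ₂ ≤ b ∧
      r = ∫ s in τ₁..τ₂, g s} := ⟨τ₁, τ₂, ha1, le_trans hτ1t hτ2t, hτ2b, rfl⟩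
  -- boundedness above
  have hbdd : BddAbove {r : ℝ | ∃ τ₁ τ₂ : ℝ, a ≤ τ₁ ∧ τ₁ ≤ τ₂ ∧ τ₂ ≤ b ∧
      r = ∫ s in τ₁..τ₂, g s} := by
    use (|dstar| + Ld * Tp) * Tp
    rintro r ⟨u, v, hau, huv, hvb, rfl⟩
    have hC0 : 0 ≤ |dstar| + Ld * Tp := by positivity
    have hnorm : ‖∫ s in u..v, g s‖ ≤ (|dstar| + Ld * Tp) * |v - u| := by
      apply intervalIntegral.norm_integral_le_of_norm_le_const
      intro x hx
      rw [Set.uIoc_of_le huv] at hx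
      have hx1 : a ≤ x := le_trans hau hx.1.le
      have hx2 : x ≤ b := le_trans hx.2 hvb
      have h1 := hLip x tstar
      have h2 : |x - tstar| ≤ Tp := by
        rw [abs_le]; constructor <;> linarith
      have h4 : Ld * |x - tstar| ≤ Ld * Tp := mul_le_mul_of_nonneg_left h2 hLd.le
      have h5 : |g x| ≤ |g x - g tstar| + |g tstar| := by
        have := abs_add_le (g x - g tstar) (g tstar); simpa using this
      have h6 : |g tstar| = |dstar| := by rw [hval]
      rw [Real.norm_eq_abs]
      linarith
    have habs : |v - u| ≤ Tp := by rw [abs_le]; constructor <;> linarith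
    calc (∫ s in u..v, g s) ≤ ‖∫ s in u..v, g s‖ := le_abs_self _
      _ ≤ (|dstar| + Ld * Tp) * |v - u| := hnorm
      _ ≤ (|dstar| + Ld * Tp) * Tp := by nlinarith
  refine le_trans ?_ (le_csSup hbdd hmem)
  rw [← hsplit]
  have hsum : dstar * xL - Ld * xL ^ 2 / 2 + (dstar * xR - Ld * xR ^ 2 / 2) ≤
      (∫ s in τ₁..tstar, g s) + (∫ s in tstar..τ₂, g s) := by linarith
  refine le_trans ?_ hsum
  clear_value xL xR τ₁ τ₂ c
  -- arithmetic case analysis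
  rcases le_or_gt c (tstar - a) with hL | hL
  · -- left side full: xL = c
    have hxLeq : xL = c := by
      simp only [hxL, hτ1def]
      rw [max_eq_right (by linarith)]; ring
    have h1 : dstar * c - Ld * c ^ 2 / 2 = dstar ^ 2 / (2 * Ld) := by
      rw [hcdef]; field_simp; ring
    have hLc : Ld * c = dstar := by rw [hcdef]; field_simp
    have h2 : 0 ≤ dstar * xR - Ld * xR ^ 2 / 2 := by
      have h8 : Ld * xR ≤ dstar := by
        have h7 := mul_le_mul_of_nonneg_left hxRc hLd.le; linarith
      nlinarith [mul_le_mul_of_nonneg_right h8 hxR0,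
        mul_nonneg (mul_nonneg hLd.le hxR0) hxR0]
    calc min (dstar ^ 2 / (2 * Ld)) (dstar * Tp - (1 / 2) * Ld * Tp ^ 2)
        ≤ dstar ^ 2 / (2 * Ld) := min_le_left _ _
      _ ≤ dstar * xL - Ld * xL ^ 2 / 2 + (dstar * xR - Ld * xR ^ 2 / 2) := by
          rw [hxLeq, h1]; linarith
  · rcases le_or_gt c (b - tstar) with hR | hR
    · have hxReq : xR = c := by
        simp only [hxR, hτ2def]
        rw [min_eq_right (by linarith)]; ring
      have h1 : dstar * c - Ld * c ^ 2 / 2 = dstar ^ 2 / (2 * Ld) := by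
        rw [hcdef]; field_simp; ring
      have hLc : Ld * c = dstar := by rw [hcdef]; field_simp
      have h2 : 0 ≤ dstar * xL - Ld * xL ^ 2 / 2 := by
        have h8 : Ld * xL ≤ dstar := by
          have h7 := mul_le_mul_of_nonneg_left hxLc hLd.le; linarith
        nlinarith [mul_le_mul_of_nonneg_right h8 hxL0,
          mul_nonneg (mul_nonneg hLd.le hxL0) hxL0]
      calc min (dstar ^ 2 / (2 * Ld)) (dstar * Tp - (1 / 2) * Ld * Tp ^ 2)
          ≤ dstar ^ 2 / (2 * Ld) := min_le_left _ _
        _ ≤ dstar * xL - Ld * xL ^ 2 / 2 + (dstar * xR - Ld * xR ^ 2 / 2) := by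
            rw [hxReq, h1]; linarith
    · -- both truncated
      have hxLeq : xL = tstar - a := by
        simp only [hxL, hτ1def]
        rw [max_eq_left (by linarith)]
      have hxReq : xR = b - tstar := by
        simp only [hxR, hτ2def]
        rw [min_eq_left (by linarith)]
      have hsumx : xL + xR = Tp := by rw [hxLeq, hxReq]; linarith
      calc min (dstar ^ 2 / (2 * Ld)) (dstar * Tp - (1 / 2) * Ld * Tp ^ 2)
          ≤ dstar * Tp - (1 / 2) * Ld * Tp ^ 2 := min_le_right _ _
        _ ≤ dstar * xL - Ld * xL ^ 2 / 2 + (dstar * xR - Ld * xR ^ 2 / 2) := by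
            rw [← hsumx]
            nlinarith [mul_nonneg hLd.le (mul_nonneg hxL0 hxR0)]
end
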